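/- Let (S, 𝓕) be a measurable space, let P and Q be probability measures on it with P ≪ Q, let α > 1, and let A ∈ 𝓕 satisfy P(A) > 0. Then (α/(α−1))·log P(A) − α·R_α(P‖Q) ≤ log Q(A). -/

import Mathlib

open MeasureTheory Classical
open scoped ENNReal

/-- The Rényi divergence of degree `α` of `Q` with respect to `P`:
`R_α(Q‖P) = (1/(α(α−1)))·log ∫ (dQ/dP)^α dP` if `Q ≪ P`, and `+∞` otherwise. -/
noncomputable def renyiDiv {S : Type*} [MeasurableSpace S] (α : ℝ)
    (Q P : Measure S) : EReal :=
  if Q ≪ P then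
    (((α * (α - 1))⁻¹ : ℝ) : EReal) * ENNReal.log (∫⁻ x, Q.rnDeriv P x ^ α ∂P)
  else ⊤

/-- Robust Rényi bound (lower bound): if `P ≪ Q`, `α > 1` and `P(A) > 0`, then
`(α/(α−1))·log P(A) − α·R_α(P‖Q) ≤ log Q(A)`. -/
theorem renyi_lower_bound {S : Type*} [MeasurableSpace S]
    (P Q : Measure S) [IsProbabilityMeasure P] [IsProbabilityMeasure Q]
    (hPQ : P ≪ Q) (α : ℝ) (hα : 1 < α)
    (A : Set S) (hA : MeasurableSet A) (hPA : 0 < P A) :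
    ((α / (α - 1) * Real.log (P A).toReal : ℝ) : EReal)
        - ((α : ℝ) : EReal) * renyiDiv α P Q ≤
      ((Real.log (Q A).toReal : ℝ) : EReal) := by
  have hα0 : (0:ℝ) < α := lt_trans one_pos hα
  have hα1 : (0:ℝ) < α - 1 := by linarith
  -- Hölder inequality
  have hpq : Real.HolderConjugate α (α / (α - 1)) := Real.HolderConjugate.conjExponent hα
  have hg : AEMeasurable (A.indicator (1 : S → ℝ≥0∞)) Q :=
    ((measurable_one).indicator hA).aemeasurable
  have holder := ENNReal.lintegral_mul_le_Lp_mul_Lq Q hpq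
    (Measure.measurable_rnDeriv P Q).aemeasurable hg
  have h1 : ∫⁻ a, (P.rnDeriv Q * A.indicator (1 : S → ℝ≥0∞)) a ∂Q = P A := by
    have heq : ∀ a, (P.rnDeriv Q * A.indicator (1 : S → ℝ≥0∞)) a
        = A.indicator (P.rnDeriv Q) a := by
      intro a
      simp only [Pi.mul_apply, Set.indicator_apply]
      split_ifs <;> simp
    rw [lintegral_congr heq, lintegral_indicator hA,
      Measure.setLIntegral_rnDeriv hPQ]
  have h2 : ∫⁻ a, (A.indicator (1 : S → ℝ≥0∞)) a ^ (α / (α - 1)) ∂Q = Q A := by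
    have heq : ∀ a, (A.indicator (1 : S → ℝ≥0∞)) a ^ (α / (α - 1))
        = A.indicator (1 : S → ℝ≥0∞) a := by
      intro a
      by_cases h : a ∈ A
      · simp [h]
      · simp [h, ENNReal.zero_rpow_of_pos (show (0:ℝ) < α/(α-1) by positivity)]
    rw [lintegral_congr heq, lintegral_indicator hA]
    simp
  rw [h1, h2] at holder
  set I := ∫⁻ a, P.rnDeriv Q a ^ α ∂Q with hI
  -- holder : P A ≤ I ^ (1/α) * Q A ^ (1/(α/(α-1)))
  rcases eq_or_ne I ⊤ with hItop | hItop
  · -- divergence is infinite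
    have hr : renyiDiv α P Q = ⊤ := by
      rw [renyiDiv, if_pos hPQ, ← hI, hItop, ENNReal.log_top,
        EReal.coe_mul_top_of_pos (by positivity)]
    rw [hr, EReal.mul_top_of_pos (by exact_mod_cast hα0), EReal.sub_top]
    exact bot_le
  · have hI0 : I ≠ 0 := by
      intro h0
      rw [h0, ENNReal.zero_rpow_of_pos (by positivity), zero_mul] at holder
      exact hPA.ne' (le_antisymm holder zero_le)
    have hQA0 : Q A ≠ 0 := fun h => hPA.ne' (hPQ h)
    have hQAtop : Q A ≠ ⊤ := (measure_lt_top Q A).ne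
    have hPAtop : P A ≠ ⊤ := (measure_lt_top P A).ne
    have hIpos : 0 < I.toReal := ENNReal.toReal_pos hI0 hItop
    have hPApos : 0 < (P A).toReal := ENNReal.toReal_pos hPA.ne' hPAtop
    have hQApos : 0 < (Q A).toReal := ENNReal.toReal_pos hQA0 hQAtop
    -- take logs of Hölder
    have hRHStop : I ^ (1/α) * Q A ^ (1/(α/(α-1))) ≠ ⊤ :=
      ENNReal.mul_ne_top (ENNReal.rpow_ne_top_of_nonneg (by positivity) hItop)
        (ENNReal.rpow_ne_top_of_nonneg (by positivity) hQAtop)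
    have htr : (P A).toReal ≤ I.toReal ^ (1/α) * (Q A).toReal ^ (1/(α/(α-1))) := by
      have h := ENNReal.toReal_mono hRHStop holder
      rwa [ENNReal.toReal_mul, ← ENNReal.toReal_rpow, ← ENNReal.toReal_rpow] at h
    have hlog : Real.log (P A).toReal
        ≤ (1/α) * Real.log I.toReal + (1/(α/(α-1))) * Real.log (Q A).toReal := by
      calc Real.log (P A).toReal
          ≤ Real.log (I.toReal ^ (1/α) * (Q A).toReal ^ (1/(α/(α-1)))) :=
            Real.log_le_log hPApos htr
        _ = (1/α) * Real.log I.toReal + (1/(α/(α-1))) * Real.log (Q A).toReal := by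
            rw [Real.log_mul (by positivity) (by positivity),
              Real.log_rpow hIpos, Real.log_rpow hQApos]
    -- rewrite divergence
    have hr : renyiDiv α P Q
        = (((α * (α - 1))⁻¹ : ℝ) : EReal) * ((Real.log I.toReal : ℝ) : EReal) := by
      rw [renyiDiv, if_pos hPQ, ← hI, ENNReal.log_pos_real' hIpos]
    rw [hr]
    norm_cast
    set a := Real.log (P A).toReal
    set b := Real.log I.toReal
    set c := Real.log (Q A).toReal
    have key : α * a ≤ b + (α - 1) * c := by
      have h := mul_le_mul_of_nonneg_left hlog hα0.le
      have e : α * ((1/α) * b + (1/(α/(α-1))) * c) = b + (α - 1) * c := by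
        field_simp
      rw [e] at h
      exact h
    have e2 : α * ((α * (α - 1))⁻¹ * b) = b / (α - 1) := by
      field_simp
    rw [e2, div_mul_eq_mul_div, div_sub_div_same, div_le_iff₀ hα1]
    linarith
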